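/- Let f be a good càdlàg function on [0,T] without negative jumps, and let (l_1, r_1), (l_2, r_2) be excursion intervals of f with l_1 < l_2. Then r_1 < l_2; in particular, distinct excursion intervals of a good function are disjoint and not nested. -/

import Mathlib

open MeasureTheory

/-- `(l, r)` is an excursion interval of `f` (on `[0, T]`): a nonempty interval
with `f(l−) = f(r−) = inf_{t ≤ r} f(t)` and `f(t) > inf_{s ≤ l} f(s)` on `(l,r)`. -/
def ExcursionInterval (f : ℝ → ℝ) (T l r : ℝ) : Prop :=
  0 ≤ l ∧ l < r ∧ r ≤ T ∧
  Function.leftLim f l = sInf (f '' Set.Icc 0 r) ∧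
  Function.leftLim f r = sInf (f '' Set.Icc 0 r) ∧
  ∀ t ∈ Set.Ioo l r, sInf (f '' Set.Icc 0 l) < f t

/-- The set `Y(f)` of right endpoints of excursion intervals of `f` on `[0,T]`. -/
def ExcEndpoints (f : ℝ → ℝ) (T : ℝ) : Set ℝ :=
  {r | ∃ l, ExcursionInterval f T l r}

/-- `f` is good on `[0,T]`: `Y(f)` has no isolated points, the complement of the
union of the excursion intervals in `[0, sup Y(f)]` is Lebesgue null, and `f` has
no local minimum at any point of `Y(f)`. -/
def GoodOn (f : ℝ → ℝ) (T : ℝ) : Prop :=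
  (∀ r ∈ ExcEndpoints f T, r ∈ closure (ExcEndpoints f T \ {r})) ∧
  volume (Set.Icc 0 (sSup (ExcEndpoints f T)) \
    ⋃ (l : ℝ) (r : ℝ) (_ : ExcursionInterval f T l r), Set.Ioo l r) = 0 ∧
  ∀ r ∈ ExcEndpoints f T, ¬ IsLocalMin f r

section Aux

open Set Filter Function Topology

variable {f : ℝ → ℝ} {T : ℝ}

lemma uncount_aux : ¬ Countable (ℕ → Bool) := by
  intro h
  have e : (ℕ → Bool) ≃ Set ℕ :=
    Equiv.arrowCongr (Equiv.refl ℕ) (Equiv.propEquivBool.symm)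
  have : Countable (Set ℕ) := Countable.of_equiv _ e
  obtain ⟨g, hg⟩ := exists_injective_nat (Set ℕ)
  have hsurj : Function.Surjective (Function.invFun g) :=
    Function.LeftInverse.surjective (Function.leftInverse_invFun hg)
  exact Function.cantor_surjective _ hsurj

/-- A càdlàg function is bounded below on `[0, r]`. -/
lemma bdd_below_aux (hright : ∀ x : ℝ, ContinuousWithinAt f (Set.Ici x) x)
    (hleft : ∀ x : ℝ, Filter.Tendsto f (nhdsWithin x (Set.Iio x))
      (nhds (Function.leftLim f x)))
    (r : ℝ) : BddBelow (f '' Set.Icc 0 r) := by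
  have hloc : ∀ x : ℝ, {t | min (leftLim f x) (f x) - 1 ≤ f t} ∈ 𝓝 x := by
    intro x
    have h1 : ∀ᶠ t in 𝓝[≥] x, min (leftLim f x) (f x) - 1 ≤ f t := by
      filter_upwards [(hright x).eventually
        (eventually_gt_nhds (show min (leftLim f x) (f x) - 1 < f x by
          have := min_le_right (leftLim f x) (f x); linarith))] with t ht
      exact ht.le
    have h2 : ∀ᶠ t in 𝓝[<] x, min (leftLim f x) (f x) - 1 ≤ f t := by
      filter_upwards [(hleft x).eventually
        (eventually_gt_nhds (show min (leftLim f x) (f x) - 1 < leftLim f x by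
          have := min_le_left (leftLim f x) (f x); linarith))] with t ht
      exact ht.le
    rw [← nhdsLT_sup_nhdsGE x]
    exact ⟨h2, h1⟩
  obtain ⟨s, -, hs⟩ := isCompact_Icc.elim_nhds_subcover
    (fun x => {t | min (leftLim f x) (f x) - 1 ≤ f t}) (fun x _ => hloc x)
  rcases s.eq_empty_or_nonempty with rfl | hne
  · simp only [Finset.notMem_empty, Set.iUnion_of_empty, Set.iUnion_empty,
      Set.subset_empty_iff] at hs
    rw [hs]; simp
  · refine ⟨(s.image (fun x => min (leftLim f x) (f x) - 1)).min' (hne.image _), ?_⟩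
    rintro v ⟨t, ht, rfl⟩
    obtain ⟨x, hxs, hx⟩ := Set.mem_iUnion₂.mp (hs ht)
    exact le_trans (Finset.min'_le _ _ (Finset.mem_image_of_mem _ hxs)) hx

lemma leftLim_ge_aux
    (hleft : ∀ x : ℝ, Filter.Tendsto f (nhdsWithin x (Set.Iio x))
      (nhds (Function.leftLim f x)))
    {a b c : ℝ} (hab : a < b) (h : ∀ t ∈ Set.Ioo a b, c ≤ f t) :
    c ≤ Function.leftLim f b :=
  ge_of_tendsto (hleft b)
    (by filter_upwards [Ioo_mem_nhdsLT_of_mem (show b ∈ Ioc a b by simp [hab])] using h)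

lemma sInf_le_aux {r : ℝ} (hbb : BddBelow (f '' Set.Icc 0 r)) {t : ℝ} (ht : t ∈ Set.Icc 0 r) :
    sInf (f '' Set.Icc 0 r) ≤ f t :=
  csInf_le hbb ⟨t, ht, rfl⟩

lemma sInf_mono_aux {a b : ℝ} (hbb : BddBelow (f '' Set.Icc 0 b)) (ha : 0 ≤ a) (hab : a ≤ b) :
    sInf (f '' Set.Icc 0 b) ≤ sInf (f '' Set.Icc 0 a) :=
  csInf_le_csInf hbb (⟨f a, a, by simp [ha], rfl⟩)
    (Set.image_mono (Set.Icc_subset_Icc_right hab))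

/-- The running infimum takes the same value at both endpoints of an excursion interval. -/
lemma exc_sInf_eq
    (hright : ∀ x : ℝ, ContinuousWithinAt f (Set.Ici x) x)
    (hleft : ∀ x : ℝ, Filter.Tendsto f (nhdsWithin x (Set.Iio x))
      (nhds (Function.leftLim f x)))
    {a b : ℝ} (h : ExcursionInterval f T a b) :
    sInf (f '' Set.Icc 0 a) = sInf (f '' Set.Icc 0 b) := by
  obtain ⟨ha0, hab, hbT, hla, hlb, hs⟩ := h
  refine le_antisymm ?_ (sInf_mono_aux (bdd_below_aux hright hleft b) ha0 hab.le)
  rw [← hlb]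
  exact leftLim_ge_aux hleft hab (fun t ht => (hs t ht).le)

/-- The key structural lemma: there is no point `y` which is simultaneously the right
endpoint of an excursion interval `(l, y)` and the left endpoint of an excursion
interval `(y, ρ)` while `f y` is strictly above the running infimum at `y`. -/
lemma no_situation_S
    (hright : ∀ x : ℝ, ContinuousWithinAt f (Set.Ici x) x)
    (hleft : ∀ x : ℝ, Filter.Tendsto f (nhdsWithin x (Set.Iio x))
      (nhds (Function.leftLim f x)))
    (hgood1 : ∀ r ∈ ExcEndpoints f T, r ∈ closure (ExcEndpoints f T \ {r}))
    {l y ρ : ℝ} (h1 : ExcursionInterval f T l y) (h2 : ExcursionInterval f T y ρ)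
    (hf : sInf (f '' Set.Icc 0 y) < f y) : False := by
  have hbb := bdd_below_aux hright hleft
  set M := sInf (f '' Set.Icc 0 y) with hM
  obtain ⟨hl0, hly, hyT, e1l, e1r, e1s⟩ := h1
  have hmly : sInf (f '' Set.Icc 0 l) = M :=
    exc_sInf_eq hright hleft ⟨hl0, hly, hyT, e1l, e1r, e1s⟩
  have hy0 : 0 ≤ y := le_trans hl0 hly.le
  have hMlt : ∀ t ∈ Set.Ioo l y, M < f t := fun t ht => hmly ▸ e1s t ht
  set A : Set ℝ := {x | x ∈ Set.Ioc l y ∧ x ∈ ExcEndpoints f T} with hA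
  have hyA : y ∈ A := ⟨⟨hly, le_refl y⟩, ⟨l, ⟨hl0, hly, hyT, e1l, e1r, e1s⟩⟩⟩
  -- S1 : the running infimum is M on [l, y], endpoint left limits equal M
  have hmmid : ∀ x : ℝ, l < x → x ≤ y → sInf (f '' Set.Icc 0 x) = M := by
    intro x hlx hxy
    refine le_antisymm ?_ ?_
    · rw [← hmly]; exact sInf_mono_aux (hbb x) hl0 hlx.le
    · rw [hM]; exact sInf_mono_aux (hbb y) (le_trans hl0 hlx.le) hxy
  have S1 : ∀ x ∈ A, Function.leftLim f x = M := by
    rintro x ⟨⟨hlx, hxy⟩, ⟨lx, hex⟩⟩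
    rw [hex.2.2.2.2.1, hmmid x hlx hxy]
  -- S2 : f jumps at each point of A
  have S2 : ∀ x ∈ A, M < f x := by
    rintro x ⟨⟨hlx, hxy⟩, -⟩
    rcases eq_or_lt_of_le hxy with rfl | hxy'
    · exact hf
    · exact hMlt x ⟨hlx, hxy'⟩
  -- S3 : each point of A has a gap to its right, free of excursion endpoints
  have S3 : ∀ x ∈ A, ∃ u, x < u ∧ ∀ z ∈ Set.Ioo x u, z ∉ ExcEndpoints f T := by
    intro x hx
    have hfx := S2 x hx
    have hmx : sInf (f '' Set.Icc 0 x) = M := hmmid x hx.1.1 hx.1.2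
    have hev : ∀ᶠ t in 𝓝[≥] x, (f x + M) / 2 < f t :=
      (hright x).eventually (eventually_gt_nhds (by linarith))
    obtain ⟨u, hu, huss⟩ := mem_nhdsGE_iff_exists_Ico_subset.mp hev
    refine ⟨u, hu, ?_⟩
    rintro z hz ⟨lz, hez⟩
    have hlz : Function.leftLim f z = sInf (f '' Set.Icc 0 z) := hez.2.2.2.2.1
    have hz1 : sInf (f '' Set.Icc 0 z) ≤ M := by
      rw [← hmx]
      exact sInf_mono_aux (hbb z) (le_trans hl0 hx.1.1.le) hz.1.le
    have hz2 : (f x + M) / 2 ≤ Function.leftLim f z := by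
      refine leftLim_ge_aux hleft hz.1 (fun t ht => (huss ⟨ht.1.le, ht.2.trans hz.2⟩).le)
    rw [hlz] at hz2
    linarith
  -- S4 : each point of A is accumulated from the left by points of A
  have S4 : ∀ x ∈ A, ∀ η > (0:ℝ), ∃ x' ∈ A, x - η < x' ∧ x' < x := by
    intro x hx η hη
    obtain ⟨u, hxu, hgap⟩ := S3 x hx
    have hcl := hgood1 x hx.2
    rw [Metric.mem_closure_iff] at hcl
    have hε0 : 0 < min η (min (u - x) (x - l)) := by
      have := hx.1.1
      simp only [lt_min_iff]
      exact ⟨hη, by linarith, by linarith⟩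
    obtain ⟨z, hzmem, hdist⟩ := hcl _ hε0
    obtain ⟨hzY, hzx⟩ := hzmem
    have hzne : z ≠ x := by simpa using hzx
    rw [Real.dist_eq, abs_sub_lt_iff] at hdist
    rcases lt_or_gt_of_ne hzne with hlt | hgt
    · refine ⟨z, ⟨⟨?_, ?_⟩, hzY⟩, ?_, hlt⟩
      · have h3 : x - z < x - l := lt_of_lt_of_le hdist.1 (le_trans (min_le_right _ _) (min_le_right _ _))
        linarith
      · exact le_trans hlt.le hx.1.2
      · have h3 : x - z < η := lt_of_lt_of_le hdist.1 (min_le_left _ _)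
        linarith
    · exfalso
      refine hgap z ⟨hgt, ?_⟩ hzY
      have h3 : z - x < u - x := lt_of_lt_of_le hdist.2 (le_trans (min_le_right _ _) (min_le_left _ _))
      linarith
  -- S5 : a point of (l, y] accumulated from the left by A belongs to A
  have S5 : ∀ x ∈ Set.Ioc l y, (∀ η > (0:ℝ), ∃ x' ∈ A, x - η < x' ∧ x' < x) → x ∈ A := by
    rintro x ⟨hlx, hxy⟩ H
    have hmx : sInf (f '' Set.Icc 0 x) = M := hmmid x hlx hxy
    have hge : M ≤ Function.leftLim f x :=
      leftLim_ge_aux hleft hlx (fun t ht => (hMlt t ⟨ht.1, lt_of_lt_of_le ht.2 hxy⟩).le)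
    have hle : Function.leftLim f x ≤ M := by
      by_contra hc
      push_neg at hc
      have hev : ∀ᶠ t in 𝓝[<] x, (M + Function.leftLim f x) / 2 < f t :=
        (hleft x).eventually (eventually_gt_nhds (by linarith))
      obtain ⟨a, ha, hass⟩ := mem_nhdsLT_iff_exists_Ioo_subset.mp hev
      have hmax : max a l < x := max_lt ha hlx
      obtain ⟨x', hx'A, hax', hx'x⟩ := H (x - max a l) (by linarith)
      have hx'gt : max a l < x' := by linarith
      have hlow : (M + Function.leftLim f x) / 2 ≤ Function.leftLim f x' := by
        refine leftLim_ge_aux hleft hx'gt (fun t ht => ?_)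
        exact (hass ⟨lt_of_le_of_lt (le_max_left a l) ht.1, ht.2.trans hx'x⟩).le
      rw [S1 x' hx'A] at hlow
      linarith
    have hll : Function.leftLim f x = M := le_antisymm hle hge
    refine ⟨⟨hlx, hxy⟩, ⟨l, ⟨hl0, hlx, le_trans hxy hyT, ?_, ?_, ?_⟩⟩⟩
    · rw [hmx]; exact e1l
    · rw [hmx]; exact hll
    · exact fun t ht => e1s t ⟨ht.1, lt_of_lt_of_le ht.2 hxy⟩
  -- A is countable
  have countA : A.Countable := by
    have hch : ∀ x ∈ A, ∃ q : ℚ, x < (q : ℝ) ∧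
        ∀ z ∈ Set.Ioo x ((q : ℝ)), z ∉ ExcEndpoints f T := by
      intro x hx
      obtain ⟨u, hxu, hgap⟩ := S3 x hx
      obtain ⟨q, hq1, hq2⟩ := exists_rat_btwn hxu
      exact ⟨q, hq1, fun z hz => hgap z ⟨hz.1, hz.2.trans hq2⟩⟩
    choose! Q hQ1 hQ2 using hch
    have hinj : Set.InjOn Q A := by
      intro x1 h1 x2 h2 he
      by_contra hne
      rcases lt_or_gt_of_ne hne with hlt | hgt
      · exact hQ2 x1 h1 x2 ⟨hlt, he ▸ hQ1 x2 h2⟩ h2.2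
      · exact hQ2 x2 h2 x1 ⟨hgt, he ▸ hQ1 x1 h1⟩ h1.2
    obtain ⟨e, he⟩ := exists_injective_nat ℚ
    exact Set.countable_iff_exists_injOn.mpr ⟨e ∘ Q, he.comp_injOn hinj⟩
  -- the residual part of the closure of A is countable
  set B : Set ℝ := {x | x ∈ Set.Ioc l y ∧ x ∈ closure A ∧ x ∉ A} with hB
  have countB : B.Countable := by
    have hch : ∀ x ∈ B, ∃ q : ℚ, (q : ℝ) < x ∧ ∀ x' ∈ A, ¬((q : ℝ) < x' ∧ x' < x) := by
      rintro x ⟨hxIoc, hxcl, hxA⟩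
      have hgap : ∃ η > (0:ℝ), ∀ x' ∈ A, ¬(x - η < x' ∧ x' < x) := by
        by_contra hcon
        push_neg at hcon
        refine hxA (S5 x hxIoc ?_)
        intro η hη
        obtain ⟨x', hx'A, hx'⟩ := hcon η hη
        exact ⟨x', hx'A, hx'⟩
      obtain ⟨η, hη, hηgap⟩ := hgap
      obtain ⟨q, hq1, hq2⟩ := exists_rat_btwn (show x - η < x by linarith)
      refine ⟨q, hq2, fun x' hx' hcon => hηgap x' hx' ⟨by linarith [hcon.1], hcon.2⟩⟩
    choose! Q hQ1 hQ2 using hch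
    have hinj : Set.InjOn Q B := by
      intro x1 hx1 x2 hx2 he
      by_contra hne
      -- wlog x1 < x2 ; find an A point in (x1, x2)
      have key : ∀ z1 z2, z1 ∈ B → z2 ∈ B → z1 < z2 → Q z1 = Q z2 → False := by
        intro z1 z2 hz1 hz2 hlt heq
        have hcl := hz1.2.1
        rw [Metric.mem_closure_iff] at hcl
        have hq2z1 : (Q z1 : ℝ) < z1 := hQ1 z1 hz1
        obtain ⟨a, haA, hadist⟩ := hcl (min (z2 - z1) (z1 - (Q z1 : ℝ)))
          (lt_min (by linarith) (by linarith))
        rw [Real.dist_eq, abs_sub_lt_iff] at hadist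
        have hanex : a ≠ z1 := fun h => hz1.2.2 (h ▸ haA)
        rcases lt_or_gt_of_ne hanex with haz | haz
        · -- a < z1 : then Q z1 < a < z1, contradicting the gap of z1
          have : z1 - a < z1 - (Q z1 : ℝ) := lt_of_lt_of_le hadist.1 (min_le_right _ _)
          exact hQ2 z1 hz1 a haA ⟨by linarith, haz⟩
        · -- a > z1 : then a ∈ (Q z2, z2), contradicting the gap of z2
          have : a - z1 < z2 - z1 := lt_of_lt_of_le hadist.2 (min_le_left _ _)
          refine hQ2 z2 hz2 a haA ⟨?_, by linarith⟩
          rw [← heq]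
          linarith
      rcases lt_or_gt_of_ne hne with hlt | hgt
      · exact key x1 x2 hx1 hx2 hlt he
      · exact key x2 x1 hx2 hx1 hgt he.symm
    obtain ⟨e, he⟩ := exists_injective_nat ℚ
    exact Set.countable_iff_exists_injOn.mpr ⟨e ∘ Q, he.comp_injOn hinj⟩
  -- closure of A is countable
  have hclsub : closure A ⊆ insert l (A ∪ B) := by
    intro z hz
    have hzIcc : z ∈ Set.Icc l y :=
      closure_minimal (fun w hw => Set.Ioc_subset_Icc_self hw.1) isClosed_Icc hz
    rcases eq_or_lt_of_le hzIcc.1 with rfl | hlz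
    · exact Set.mem_insert _ _
    · by_cases hzA : z ∈ A
      · exact Set.mem_insert_of_mem _ (Or.inl hzA)
      · exact Set.mem_insert_of_mem _ (Or.inr ⟨⟨hlz, hzIcc.2⟩, hz, hzA⟩)
  have hclcount : (closure A).Countable :=
    Set.Countable.mono hclsub ((countA.union countB).insert l)
  -- but the closure of A is a nonempty perfect set, hence uncountable
  have hpre : Preperfect A := by
    rw [preperfect_iff_nhds]
    intro x hx U hU
    rw [Metric.mem_nhds_iff] at hU
    obtain ⟨ε, hε, hball⟩ := hU
    obtain ⟨x', hx'A, h1, h2⟩ := S4 x hx ε hε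
    refine ⟨x', ⟨hball ?_, hx'A⟩, ne_of_lt h2⟩
    rw [Metric.mem_ball, Real.dist_eq, abs_sub_lt_iff]
    constructor <;> linarith
  obtain ⟨F, hFr, -, hFi⟩ := hpre.perfect_closure.exists_nat_bool_injection
    ⟨y, subset_closure hyA⟩
  have : Countable (ℕ → Bool) := by
    have h1 : (Set.range F).Countable := hclcount.mono hFr
    have h2 := h1.to_subtype
    exact Countable.of_equiv _ (Equiv.ofInjective F hFi).symm
  exact uncount_aux this

end Aux

open Set Filter Function Topology in
/-- Excursion intervals of a good function are not nested: if `l₁ < l₂` then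
`r₁ < l₂`. -/
theorem stmt14 (f : ℝ → ℝ) (T : ℝ)
    (hright : ∀ x : ℝ, ContinuousWithinAt f (Set.Ici x) x)
    (hleft : ∀ x : ℝ, Filter.Tendsto f (nhdsWithin x (Set.Iio x))
      (nhds (Function.leftLim f x)))
    (hnonegjump : ∀ t : ℝ, Function.leftLim f t ≤ f t)
    (hgood : GoodOn f T)
    (l₁ r₁ l₂ r₂ : ℝ)
    (h₁ : ExcursionInterval f T l₁ r₁) (h₂ : ExcursionInterval f T l₂ r₂)
    (hl : l₁ < l₂) :
    r₁ < l₂ := by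
  by_contra hcon
  push_neg at hcon
  have hbb := bdd_below_aux hright hleft
  obtain ⟨hl10, hl1r1, hr1T, e1l, e1r, e1s⟩ := id h₁
  obtain ⟨hl20, hl2r2, hr2T, e2l, e2r, e2s⟩ := id h₂
  rcases eq_or_lt_of_le hcon with heq | hlt
  · -- l₂ = r₁ : then f must jump at l₂, else l₂ is a local minimum
    subst heq
    have hflt : sInf (f '' Set.Icc 0 l₂) < f l₂ := by
      rcases lt_or_ge (sInf (f '' Set.Icc 0 l₂)) (f l₂) with h | hle
      · exact h
      have hfeq : f l₂ = sInf (f '' Set.Icc 0 l₂) :=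
        le_antisymm hle (sInf_le_aux (hbb l₂) ⟨hl20, le_refl _⟩)
      exfalso
      have hlocmin : IsLocalMin f l₂ := by
        filter_upwards [Ioo_mem_nhds hl hl2r2] with t ht
        rw [hfeq]
        rcases lt_trichotomy t l₂ with h | h | h
        · have h5 := e1s t ⟨ht.1, h⟩
          have hmono := sInf_mono_aux (hbb l₂) hl10 hl.le
          linarith
        · subst h; exact le_of_eq hfeq.symm
        · exact (e2s t ⟨h, ht.2⟩).le
      exact hgood.2.2 l₂ ⟨l₁, h₁⟩ hlocmin
    exact no_situation_S hright hleft hgood.1 h₁ h₂ hflt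
  · -- l₂ < r₁ : then (l₁, l₂) is itself an excursion interval and f jumps at l₂
    have hmono21 : sInf (f '' Set.Icc 0 l₂) ≤ sInf (f '' Set.Icc 0 l₁) :=
      sInf_mono_aux (hbb l₂) hl10 hl.le
    have hm12 : sInf (f '' Set.Icc 0 r₁) = sInf (f '' Set.Icc 0 l₂) := by
      refine le_antisymm (sInf_mono_aux (hbb r₁) hl20 hlt.le) ?_
      rw [← e1r]
      refine leftLim_ge_aux hleft hlt (fun t ht => ?_)
      have := e1s t ⟨lt_trans hl ht.1, ht.2⟩
      linarith
    have hml2r2 : sInf (f '' Set.Icc 0 l₂) = sInf (f '' Set.Icc 0 r₂) :=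
      exc_sInf_eq hright hleft h₂
    have hexc : ExcursionInterval f T l₁ l₂ :=
      ⟨hl10, hl, le_trans hl2r2.le hr2T,
        by rw [e1l]; exact hm12,
        by rw [e2l]; exact hml2r2.symm,
        fun t ht => e1s t ⟨ht.1, lt_trans ht.2 hlt⟩⟩
    have hflt : sInf (f '' Set.Icc 0 l₂) < f l₂ := by
      have := e1s l₂ ⟨hl, hlt⟩
      linarith
    exact no_situation_S hright hleft hgood.1 hexc h₂ hflt
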